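/- Let K be a compact convex set in ℝ^n with nonempty interior, and suppose K is the convex hull of compact convex sets K₁,...,K_p with p > n+1. For positive integers m₁,...,m_p, the covering functional satisfies Γ_{m₁+⋯+m_p}(K) ≤ max_{i∈[p]} (n+Γ_{m_i}(K_i))/(n+1). -/

import Mathlib

open Set Pointwise

/-- The covering functional: the smallest `γ ≥ 0` such that `K` can be
covered by `m` translates of `γ • K`. -/
noncomputable def coveringFunctional {n : ℕ} (K : Set (EuclideanSpace ℝ (Fin n))) (m : ℕ) : ℝ :=
  sInf {γ : ℝ | 0 ≤ γ ∧ ∃ x : Fin m → EuclideanSpace ℝ (Fin n),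
    K ⊆ ⋃ i, x i +ᵥ γ • K}

lemma exists_decomp {n p : ℕ} (K : Fin p → Set (EuclideanSpace ℝ (Fin n)))
    {x : EuclideanSpace ℝ (Fin n)} (hx : x ∈ convexHull ℝ (⋃ i, K i)) :
    ∃ i, ∃ z ∈ K i, ∃ v ∈ convexHull ℝ (⋃ i, K i),
      x = (((n : ℝ) + 1)⁻¹) • z + ((n : ℝ) / ((n : ℝ) + 1)) • v := by
  classical
  obtain ⟨ι, hfin, z, w, hrange, hai, hpos, hsum, hxe⟩ :=
    eq_pos_convex_span_of_mem_convexHull hx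
  have hne : Nonempty ι := by
    by_contra h
    rw [not_nonempty_iff] at h
    simp [Finset.univ_eq_empty] at hsum
  have hcard : (Fintype.card ι : ℝ) ≤ (n : ℝ) + 1 := by
    have h1 := hai.card_le_finrank_succ
    have h2 : Module.finrank ℝ (vectorSpan ℝ (Set.range z)) ≤ n := by
      have := Submodule.finrank_le (vectorSpan ℝ (Set.range z))
      rwa [finrank_euclideanSpace_fin] at this
    exact_mod_cast h1.trans (by omega)
  -- a coefficient at least 1/(n+1)
  obtain ⟨k, hk⟩ : ∃ k, ((n : ℝ) + 1)⁻¹ ≤ w k := by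
    by_contra h
    push_neg at h
    have hlt : ∑ j, w j < ∑ _j : ι, ((n : ℝ) + 1)⁻¹ :=
      Finset.sum_lt_sum_of_nonempty Finset.univ_nonempty fun j _ => h j
    rw [hsum, Finset.sum_const, Finset.card_univ, nsmul_eq_mul] at hlt
    have hn1 : (0 : ℝ) < (n : ℝ) + 1 := by positivity
    have : (Fintype.card ι : ℝ) * ((n : ℝ) + 1)⁻¹ ≤ 1 := by
      rw [mul_inv_le_iff₀ hn1, one_mul]; exact hcard
    linarith
  obtain ⟨i, hzk⟩ : ∃ i, z k ∈ K i := by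
    have := hrange (Set.mem_range_self k)
    simpa using this
  rcases Nat.eq_zero_or_pos n with rfl | hn
  · -- trivial: the space is a subsingleton
    haveI : Subsingleton (EuclideanSpace ℝ (Fin 0)) :=
      ⟨fun a b => PiLp.ext fun i => i.elim0⟩
    refine ⟨i, z k, hzk, z k, subset_convexHull ℝ _ (Set.mem_iUnion.2 ⟨i, hzk⟩), ?_⟩
    exact Subsingleton.elim _ _
  · set σ : ℝ := ((n : ℝ) + 1)⁻¹ with hσ
    set τ : ℝ := (n : ℝ) / ((n : ℝ) + 1) with hτ
    have hn1 : (0 : ℝ) < (n : ℝ) + 1 := by positivity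
    have hτ0 : (0 : ℝ) < τ := by
      rw [hτ]; positivity
    have hwk1 : w k ≤ 1 := by
      rw [← hsum]
      exact Finset.single_le_sum (fun j _ => (hpos j).le) (Finset.mem_univ k)
    set v : EuclideanSpace ℝ (Fin n) := τ⁻¹ • (x - σ • z k) with hv
    refine ⟨i, z k, hzk, v, ?_, ?_⟩
    · -- v is a convex combination of the z j
      set q : ι → ℝ := fun j => τ⁻¹ * (w j - if j = k then σ else 0) with hq
      have hsumq : ∑ j, q j = 1 := by
        simp only [hq]
        rw [← Finset.mul_sum, Finset.sum_sub_distrib, hsum]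
        simp only [Finset.sum_ite_eq', Finset.mem_univ, if_pos]
        field_simp [hσ, hτ]
        rw [hσ, hτ, eq_div_iff hn1.ne', sub_mul, inv_mul_cancel₀ hn1.ne']; ring
      have hvq : v = ∑ j, q j • z j := by
        rw [hv]
        simp only [hq, mul_smul, ← Finset.smul_sum]
        congr 1
        simp only [sub_smul, ite_smul, zero_smul, Finset.sum_sub_distrib,
          Finset.sum_ite_eq', Finset.mem_univ, if_pos, hxe]
      rw [hvq]
      refine (convex_convexHull ℝ _).sum_mem (fun j _ => ?_) hsumq
        (fun j _ => subset_convexHull ℝ _ (hrange (Set.mem_range_self j)))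
      rw [hq]
      have : (if j = k then σ else 0) ≤ w j := by
        split
        · subst ‹j = k›; exact hk
        · exact (hpos j).le
      have := sub_nonneg.2 this
      positivity
    · rw [hv, smul_inv_smul₀ hτ0.ne']
      abel

lemma one_mem_cfSet {n : ℕ} (K : Set (EuclideanSpace ℝ (Fin n))) {m : ℕ} (hm : 0 < m) :
    (1 : ℝ) ∈ {γ : ℝ | 0 ≤ γ ∧ ∃ x : Fin m → EuclideanSpace ℝ (Fin n),
      K ⊆ ⋃ i, x i +ᵥ γ • K} := by
  refine ⟨zero_le_one, fun _ => 0, fun y hy => Set.mem_iUnion.2 ⟨⟨0, hm⟩, ?_⟩⟩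
  simpa using hy

lemma cf_nonneg {n : ℕ} (K : Set (EuclideanSpace ℝ (Fin n))) (m : ℕ) :
    0 ≤ coveringFunctional K m := by
  by_cases hne : {γ : ℝ | 0 ≤ γ ∧ ∃ x : Fin m → EuclideanSpace ℝ (Fin n),
      K ⊆ ⋃ i, x i +ᵥ γ • K}.Nonempty
  · exact le_csInf hne fun γ hγ => hγ.1
  · rw [Set.not_nonempty_iff_eq_empty] at hne
    rw [coveringFunctional, hne, Real.sInf_empty]

theorem covering_functional_convexHull_le_of_gt {n p : ℕ} (hpn : n + 1 < p)
    (K : Fin p → Set (EuclideanSpace ℝ (Fin n)))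
    (hKne : ∀ i, (K i).Nonempty) (hKc : ∀ i, IsCompact (K i)) (hKconv : ∀ i, Convex ℝ (K i))
    (hint : (interior (convexHull ℝ (⋃ i, K i))).Nonempty)
    (m : Fin p → ℕ) (hm : ∀ i, 0 < m i) :
    coveringFunctional (convexHull ℝ (⋃ i, K i)) (∑ i, m i) ≤
      ⨆ i, ((n : ℝ) + coveringFunctional (K i) (m i)) / (n + 1) := by
  classical
  haveI : NeZero p := ⟨by omega⟩
  set KH := convexHull ℝ (⋃ i, K i) with hKH
  have hKHconv : Convex ℝ KH := convex_convexHull ℝ _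
  have hsub : ∀ i, K i ⊆ KH := fun i =>
    (Set.subset_iUnion K i).trans (subset_convexHull ℝ _)
  obtain ⟨k₀, hk₀⟩ : KH.Nonempty := (hKne 0).mono (hsub 0)
  have hΓ0 : ∀ i, 0 ≤ coveringFunctional (K i) (m i) := fun i => cf_nonneg _ _
  set R := ⨆ i, ((n : ℝ) + coveringFunctional (K i) (m i)) / (n + 1) with hR
  have hn1 : (0 : ℝ) < (n : ℝ) + 1 := by positivity
  have hRb : ∀ i, ((n : ℝ) + coveringFunctional (K i) (m i)) / (n + 1) ≤ R := by
    intro i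
    rw [hR]
    exact le_ciSup (f := fun i => ((n : ℝ) + coveringFunctional (K i) (m i)) / ((n : ℝ) + 1))
      (Set.Finite.bddAbove (Set.finite_range _)) i
  have hR0 : 0 ≤ R :=
    le_trans (div_nonneg (add_nonneg (Nat.cast_nonneg n) (hΓ0 0)) hn1.le) (hRb 0)
  refine le_of_forall_pos_le_add fun ε hε => ?_
  set lam := R + ε with hlam
  have hlam0 : 0 < lam := by positivity
  -- pick near-optimal coverings of each K i
  have hpick : ∀ i, ∃ γ : ℝ, (0 ≤ γ ∧ ∃ x : Fin (m i) → EuclideanSpace ℝ (Fin n),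
      K i ⊆ ⋃ j, x j +ᵥ γ • K i) ∧ γ < coveringFunctional (K i) (m i) + ε := by
    intro i
    obtain ⟨γ, hγmem, hγlt⟩ := Real.lt_sInf_add_pos ⟨1, one_mem_cfSet (K i) (hm i)⟩ hε
    exact ⟨γ, hγmem, hγlt⟩
  choose γ hγmem hγlt using hpick
  have hγ0 : ∀ i, 0 ≤ γ i := fun i => (hγmem i).1
  choose xs hxs using fun i => (hγmem i).2
  set σ : ℝ := ((n : ℝ) + 1)⁻¹ with hσ
  have hσ0 : 0 ≤ σ := by rw [hσ]; positivity
  have hs_le : ∀ i, ((n : ℝ) + γ i) / ((n : ℝ) + 1) ≤ lam := by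
    intro i
    have h1 : ((n : ℝ) + γ i) / ((n : ℝ) + 1)
        ≤ ((n : ℝ) + (coveringFunctional (K i) (m i) + ε)) / ((n : ℝ) + 1) := by
      gcongr
      exact (hγlt i).le
    have h2 : ((n : ℝ) + (coveringFunctional (K i) (m i) + ε)) / ((n : ℝ) + 1)
        = ((n : ℝ) + coveringFunctional (K i) (m i)) / ((n : ℝ) + 1) + ε / ((n : ℝ) + 1) := by
      ring
    have h3 : ε / ((n : ℝ) + 1) ≤ ε := div_le_self hε.le (by
      have : (0 : ℝ) ≤ (n : ℝ) := Nat.cast_nonneg n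
      linarith)
    have h4 := hRb i
    rw [hlam]
    linarith
  -- the combined covering
  set c : (Σ i : Fin p, Fin (m i)) → EuclideanSpace ℝ (Fin n) := fun q =>
    σ • xs q.1 q.2 - (lam - ((n : ℝ) + γ q.1) / ((n : ℝ) + 1)) • k₀ with hc
  have e : (Σ i : Fin p, Fin (m i)) ≃ Fin (∑ i, m i) :=
    Fintype.equivFinOfCardEq (by simp)
  have hmem : lam ∈ {γ : ℝ | 0 ≤ γ ∧ ∃ x : Fin (∑ i, m i) → EuclideanSpace ℝ (Fin n),
      KH ⊆ ⋃ i, x i +ᵥ γ • KH} := by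
    refine ⟨hlam0.le, fun j => c (e.symm j), fun x hx => ?_⟩
    obtain ⟨i, z, hz, v, hv, hxe⟩ := exists_decomp K hx
    obtain ⟨j, hj⟩ := Set.mem_iUnion.1 (hxs i hz)
    rw [Set.mem_vadd_set] at hj
    obtain ⟨b, hb, hbz⟩ := hj
    obtain ⟨w, hw, hwb⟩ := Set.mem_smul_set.1 hb
    have hzeq : z = xs i j + γ i • w := by rw [← hbz, ← hwb]; rfl
    refine Set.mem_iUnion.2 ⟨e ⟨i, j⟩, ?_⟩
    simp only [Equiv.symm_apply_apply]
    have hdiff : x - c ⟨i, j⟩ =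
        (σ * γ i) • w + ((n : ℝ) / ((n : ℝ) + 1)) • v
          + (lam - ((n : ℝ) + γ i) / ((n : ℝ) + 1)) • k₀ := by
      rw [hxe, hzeq, hc]
      module
    have hsum3 : σ * γ i + (n : ℝ) / ((n : ℝ) + 1)
        + (lam - ((n : ℝ) + γ i) / ((n : ℝ) + 1)) = lam := by
      rw [hσ]; field_simp; ring
    have humem : x - c ⟨i, j⟩ ∈ lam • KH := by
      have hin : lam⁻¹ • (x - c ⟨i, j⟩) ∈ KH := by
        rw [hdiff, smul_add, smul_add, smul_smul, smul_smul, smul_smul]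
        have h1 : ∀ q ∈ Finset.univ,
            0 ≤ (![lam⁻¹ * (σ * γ i), lam⁻¹ * ((n : ℝ) / ((n : ℝ) + 1)),
              lam⁻¹ * (lam - ((n : ℝ) + γ i) / ((n : ℝ) + 1))] q) := by
          intro q _
          fin_cases q
          · simp only [Matrix.cons_val_zero]
            exact mul_nonneg (inv_nonneg.2 hlam0.le) (mul_nonneg hσ0 (hγ0 i))
          · simp only [Matrix.cons_val_one, Matrix.head_cons]
            exact mul_nonneg (inv_nonneg.2 hlam0.le)
              (div_nonneg (Nat.cast_nonneg n) hn1.le)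
          · have := hs_le i
            simp only [Matrix.cons_val_two, Matrix.tail_cons, Matrix.head_cons]
            exact mul_nonneg (inv_nonneg.2 hlam0.le) (by linarith)
        have h2 : ∑ q, (![lam⁻¹ * (σ * γ i), lam⁻¹ * ((n : ℝ) / ((n : ℝ) + 1)),
            lam⁻¹ * (lam - ((n : ℝ) + γ i) / ((n : ℝ) + 1))] q) = 1 := by
          rw [Fin.sum_univ_three]
          simp only [Matrix.cons_val_zero, Matrix.cons_val_one, Matrix.head_cons,
            Matrix.cons_val_two, Matrix.tail_cons]
          rw [← mul_add, ← mul_add, hsum3, inv_mul_cancel₀ hlam0.ne']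
        have h3 : ∀ q ∈ Finset.univ, (![w, v, k₀] q) ∈ KH := by
          intro q _
          fin_cases q
          · exact hsub i hw
          · exact hv
          · exact hk₀
        have hsm := hKHconv.sum_mem h1 h2 h3
        rw [Fin.sum_univ_three] at hsm
        simpa using hsm
      have : x - c ⟨i, j⟩ = lam • (lam⁻¹ • (x - c ⟨i, j⟩)) :=
        (smul_inv_smul₀ hlam0.ne' _).symm
      rw [this]
      exact Set.smul_mem_smul_set hin
    exact Set.mem_vadd_set.2 ⟨x - c ⟨i, j⟩, humem, by
      simp only [vadd_eq_add]; abel⟩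
  calc coveringFunctional KH (∑ i, m i) ≤ lam := csInf_le ⟨0, fun γ hγ => hγ.1⟩ hmem
    _ = R + ε := hlam
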